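/- Fix α > 0 and T > 0, and let g : [0,T] → ℂ be continuous. Define u(x,t) := (T_t^α g)(x) = ∫_0^t K_α(x,t-τ) g(τ) dτ for x > 0 and 0 < t < T. Then u satisfies ∂_t u(x,t) = x^{2(α-1)/α} ∂_{xx} u(x,t) for all x > 0 and 0 < t < T; for every t ∈ (0,T), u(x,t) → g(t) as x → 0⁺ and u(x,t) → 0 as x → ∞; and for every x > 0, u(x,t) → 0 as t → 0⁺. -/

import Mathlib

open MeasureTheory Filter Set

/-- The kernel `K_α(x,t) = (α^α/(2^α Γ(α/2))) x t^{-(α/2+1)} exp(-α² x^{2/α}/(4t))`. -/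
noncomputable def Kker (α x t : ℝ) : ℝ :=
  (α ^ α / (2 ^ α * Real.Gamma (α / 2))) * x * t ^ (-(α / 2 + 1)) *
    Real.exp (-(α ^ 2) * x ^ (2 / α) / (4 * t))

/-- The transform `(T_t^α g)(x) = ∫_0^t K_α(x,t-τ) g(τ) dτ`. -/
noncomputable def Tt (α t : ℝ) (g : ℝ → ℂ) (x : ℝ) : ℂ :=
  ∫ τ in Set.Ioo (0 : ℝ) t, (Kker α x (t - τ) : ℂ) * g τ


noncomputable def c0 (α : ℝ) : ℝ := α ^ α / (2 ^ α * Real.Gamma (α / 2))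
noncomputable def pe (α : ℝ) : ℝ := α / 2 + 1
noncomputable def qe (α : ℝ) : ℝ := 2 / α
noncomputable def be (α x : ℝ) : ℝ := α ^ 2 * x ^ (2 / α) / 4
/-- core b r s = s^{-r} e^{-b/s} -/
noncomputable def core (b r s : ℝ) : ℝ := s ^ (-r) * Real.exp (-(b / s))

lemma Kker_eq (α x s : ℝ) : Kker α x s = c0 α * x * core (be α x) (pe α) s := by
  unfold Kker c0 core pe be
  have h : -(α ^ 2) * x ^ (2 / α) / (4 * s) = -(α ^ 2 * x ^ (2 / α) / 4 / s) := by ring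
  rw [h]; ring

lemma c0_pos {α : ℝ} (hα : 0 < α) : 0 < c0 α := by
  unfold c0
  have := Real.Gamma_pos_of_pos (by linarith : 0 < α / 2)
  positivity

lemma be_pos {α x : ℝ} (hα : 0 < α) (hx : 0 < x) : 0 < be α x := by
  unfold be
  have := Real.rpow_pos_of_pos hx (2 / α)
  positivity

lemma pe_pos {α : ℝ} (hα : 0 < α) : 0 < pe α := by unfold pe; linarith

lemma core_nonneg {b r s : ℝ} (hs : 0 < s) : 0 ≤ core b r s := by
  unfold core; positivity

lemma core_pos {b r s : ℝ} (hs : 0 < s) : 0 < core b r s := by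
  unfold core; positivity

/-- the master bound: v^r e^{-v} ≤ r^r e^{-r}. -/
lemma rpow_exp_le {v r : ℝ} (hv : 0 < v) (hr : 0 < r) :
    v ^ r * Real.exp (-v) ≤ r ^ r * Real.exp (-r) := by
  have h1 : Real.log (v / r) ≤ v / r - 1 := Real.log_le_sub_one_of_pos (by positivity)
  have h2 : Real.log v - Real.log r ≤ v / r - 1 := by
    rwa [Real.log_div (ne_of_gt hv) (ne_of_gt hr)] at h1
  have h3 : r * Real.log v - v ≤ r * Real.log r - r := by
    have := mul_le_mul_of_nonneg_left h2 hr.le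
    have hrr : r * (v / r) = v := by field_simp
    nlinarith [this]
  calc v ^ r * Real.exp (-v) = Real.exp (r * Real.log v - v) := by
        rw [Real.rpow_def_of_pos hv, Real.exp_sub, Real.exp_neg, mul_comm (Real.log v) r]
        field_simp
    _ ≤ Real.exp (r * Real.log r - r) := Real.exp_le_exp.mpr h3
    _ = r ^ r * Real.exp (-r) := by
        rw [Real.rpow_def_of_pos hr, Real.exp_sub, Real.exp_neg, mul_comm (Real.log r) r]
        field_simp

noncomputable def Mf (r : ℝ) : ℝ := r ^ r * Real.exp (-r)

lemma Mf_pos {r : ℝ} (hr : 0 < r) : 0 < Mf r := by unfold Mf; positivity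

lemma core_bound {b r s : ℝ} (hr : 0 < r) (hb : 0 < b) (hs : 0 < s) :
    core b r s ≤ b ^ (-r) * Mf r := by
  have hv : 0 < b / s := by positivity
  have key := rpow_exp_le hv hr
  have h1 : core b r s = b ^ (-r) * ((b / s) ^ r * Real.exp (-(b / s))) := by
    unfold core
    rw [Real.div_rpow hb.le hs.le, Real.rpow_neg hb.le, Real.rpow_neg hs.le]
    field_simp
  rw [h1]
  unfold Mf
  have : 0 < b ^ (-r) := Real.rpow_pos_of_pos hb _
  nlinarith [key]

/-- monotonicity in b : larger b gives smaller core -/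
lemma core_mono {b b' r s : ℝ} (hs : 0 < s) (hbb : b ≤ b') :
    core b' r s ≤ core b r s := by
  unfold core
  have h : Real.exp (-(b' / s)) ≤ Real.exp (-(b / s)) := by
    apply Real.exp_le_exp.mpr
    have : b / s ≤ b' / s := by gcongr
    linarith
  nlinarith [Real.rpow_pos_of_pos hs (-r), h, Real.exp_pos (-(b'/s))]

lemma core_tendsto_zero {b r : ℝ} (hb : 0 < b) :
    Tendsto (fun s => core b r s) (nhdsWithin 0 (Ioi 0)) (nhds 0) := by
  have h1 : Tendsto (fun s : ℝ => b / s) (nhdsWithin 0 (Ioi 0)) atTop := by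
    simpa [div_eq_mul_inv] using (tendsto_inv_nhdsGT_zero (𝕜 := ℝ)).const_mul_atTop hb
  have h2 : Tendsto (fun v : ℝ => v ^ r * Real.exp (-(1:ℝ) * v)) atTop (nhds 0) :=
    tendsto_rpow_mul_exp_neg_mul_atTop_nhds_zero r 1 one_pos
  have h3 := (h2.comp h1).const_mul (b ^ (-r))
  rw [mul_zero] at h3
  apply h3.congr'
  filter_upwards [self_mem_nhdsWithin] with s hs
  simp only [Function.comp]
  unfold core
  rw [Real.div_rpow hb.le (le_of_lt hs), Real.rpow_neg hb.le, Real.rpow_neg (le_of_lt hs)]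
  have h4 : Real.exp (-(1:ℝ) * (b / s)) = Real.exp (-(b/s)) := by norm_num
  rw [h4]
  field_simp


lemma rpow_neg_two_eq {s : ℝ} (hs : 0 < s) : s ^ (-2 : ℝ) = (s ^ 2)⁻¹ := by
  rw [show (-2:ℝ) = ((-2:ℤ):ℝ) by norm_num, Real.rpow_intCast]
  simp [zpow_neg, zpow_ofNat]

lemma rpow_sub_two {s r : ℝ} (hs : 0 < s) : s ^ (r - 2) = s ^ r * (s ^ 2)⁻¹ := by
  rw [show r - 2 = r + (-2:ℝ) by ring, Real.rpow_add hs, rpow_neg_two_eq hs]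

lemma rpow_sub_one' {s r : ℝ} (hs : 0 < s) : s ^ (r - 1) = s ^ r * s⁻¹ := by
  rw [show r - 1 = r + (-1:ℝ) by ring, Real.rpow_add hs, Real.rpow_neg_one]

lemma hasDerivAt_core {b r s : ℝ} (hs : 0 < s) :
    HasDerivAt (core b r) (Real.exp (-(b / s)) * (b * s ^ (-r - 2) - r * s ^ (-r - 1))) s := by
  have h1 : HasDerivAt (fun s : ℝ => s ^ (-r)) (-r * s ^ (-r - 1)) s :=
    Real.hasDerivAt_rpow_const (Or.inl hs.ne')
  have h2 : HasDerivAt (fun s : ℝ => -(b / s)) (b * (s ^ 2)⁻¹) s := by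
    have := ((hasDerivAt_inv hs.ne').const_mul b).neg
    simp only [div_eq_mul_inv] at *
    refine this.congr_deriv ?_
    ring
  have h := h1.mul h2.exp
  refine h.congr_deriv ?_
  rw [show -r - 2 = (-r) - 2 by ring, rpow_sub_two hs]
  ring

noncomputable def Kt (α x s : ℝ) : ℝ := if 0 < s then Kker α x s else 0

noncomputable def K1 (α x s : ℝ) : ℝ :=
  if 0 < s then
    c0 α * x * (Real.exp (-(be α x / s)) *
      (be α x * s ^ (-(pe α) - 2) - pe α * s ^ (-(pe α) - 1)))
  else 0

lemma hasDerivAt_Kt {α x : ℝ} (hα : 0 < α) (hx : 0 < x) (s : ℝ) :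
    HasDerivAt (Kt α x) (K1 α x s) s := by
  rcases lt_trichotomy s 0 with hs | hs | hs
  · have h0 : HasDerivAt (fun _ : ℝ => (0:ℝ)) 0 s := hasDerivAt_const s 0
    have he : Kt α x =ᶠ[nhds s] (fun _ => (0:ℝ)) := by
      filter_upwards [Iio_mem_nhds hs] with y hy
      simp [Kt, not_lt.mpr (le_of_lt (mem_Iio.mp hy))]
    rw [K1, if_neg (by linarith)]
    exact h0.congr_of_eventuallyEq he
  · subst hs
    rw [K1, if_neg (lt_irrefl 0)]
    rw [hasDerivAt_iff_tendsto_slope]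
    rw [← nhdsLT_sup_nhdsGT (0:ℝ), Filter.tendsto_sup]
    constructor
    · apply Tendsto.congr' _ tendsto_const_nhds
      filter_upwards [self_mem_nhdsWithin] with y (hy : y < 0)
      simp [slope, Kt, not_lt.mpr (le_of_lt hy), lt_irrefl]
    · have hcz := (core_tendsto_zero (r := pe α + 1) (be_pos hα hx)).const_mul (c0 α * x)
      rw [mul_zero] at hcz
      apply Tendsto.congr' _ hcz
      filter_upwards [self_mem_nhdsWithin] with y (hy : 0 < y)
      simp only [slope, Kt, if_pos hy, if_neg (lt_irrefl (0:ℝ)), vsub_eq_sub, smul_eq_mul, sub_zero]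
      rw [Kker_eq]
      unfold core
      rw [show -(pe α + 1) = -(pe α) + (-1:ℝ) by ring, Real.rpow_add hy, Real.rpow_neg_one]
      field_simp
  · have hcore := (hasDerivAt_core (b := be α x) (r := pe α) hs).const_mul (c0 α * x)
    have he : Kt α x =ᶠ[nhds s] (fun y => c0 α * x * core (be α x) (pe α) y) := by
      filter_upwards [Ioi_mem_nhds hs] with y hy
      simp [Kt, if_pos (show (0:ℝ) < y from hy), Kker_eq]
    rw [K1, if_pos hs]
    exact hcore.congr_of_eventuallyEq he

noncomputable def Kx (α y s : ℝ) : ℝ :=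
  c0 α * s ^ (-(pe α)) * Real.exp (-(be α y / s)) *
    (1 - α ^ 2 / (4 * s) * qe α * y ^ qe α)

noncomputable def Kxx (α y s : ℝ) : ℝ :=
  c0 α * s ^ (-(pe α)) * Real.exp (-(be α y / s)) * (α ^ 2 / (4 * s) * qe α) *
    y ^ (qe α - 1) * (α ^ 2 / (4 * s) * qe α * y ^ qe α - (1 + qe α))

lemma harg {α s : ℝ} (z : ℝ) : -(α ^ 2 / (4 * s)) * z ^ qe α = -(be α z / s) := by
  unfold be qe; ring

lemma hasDerivAt_Kker_x {α s y : ℝ} (hs : 0 < s) (hy : 0 < y) :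
    HasDerivAt (fun z => Kker α z s) (Kx α y s) y := by
  set w := α ^ 2 / (4 * s) with hw
  have h1 : HasDerivAt (fun z : ℝ => z ^ qe α) (qe α * y ^ (qe α - 1)) y :=
    Real.hasDerivAt_rpow_const (Or.inl hy.ne')
  have h2 := (h1.const_mul (-w)).exp
  have h3 := ((hasDerivAt_id y).mul h2).const_mul (c0 α * s ^ (-(pe α)))
  have hfe : (fun z => c0 α * s ^ (-(pe α)) * (z * Real.exp (-w * z ^ qe α)))
      = fun z => Kker α z s := by
    funext z
    rw [Kker_eq, hw, harg z]
    unfold core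
    ring
  rw [← hfe] at *
  refine h3.congr_deriv ?_
  unfold Kx
  rw [hw, harg y, rpow_sub_one' hy]
  field_simp
  simp only [id]
  ring

lemma hasDerivAt_Kx_x {α s y : ℝ} (hs : 0 < s) (hy : 0 < y) :
    HasDerivAt (fun z => Kx α z s) (Kxx α y s) y := by
  set w := α ^ 2 / (4 * s) with hw
  have h1 : HasDerivAt (fun z : ℝ => z ^ qe α) (qe α * y ^ (qe α - 1)) y :=
    Real.hasDerivAt_rpow_const (Or.inl hy.ne')
  have h2 := (h1.const_mul (-w)).exp
  have h4 := (h1.const_mul (w * qe α)).const_sub 1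
  have h5 := (h2.mul h4).const_mul (c0 α * s ^ (-(pe α)))
  have hfe : (fun z => c0 α * s ^ (-(pe α)) *
      (Real.exp (-w * z ^ qe α) * (1 - w * qe α * z ^ qe α)))
      = fun z => Kx α z s := by
    funext z
    unfold Kx
    rw [hw, harg z]
    ring
  rw [← hfe]
  refine h5.congr_deriv ?_
  unfold Kxx
  rw [hw, harg y]
  ring

lemma kernel_pde {α x s : ℝ} (hα : 0 < α) (hx : 0 < x) (hs : 0 < s) :
    K1 α x s = x ^ (2 * (α - 1) / α) * Kxx α x s := by
  have hα' : α ≠ 0 := ne_of_gt hα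
  have hX : (0:ℝ) < x ^ (2 / α) := Real.rpow_pos_of_pos hx _
  have hx2 : x ^ (2 * (α - 1) / α) = x ^ 2 / x ^ (2 / α) := by
    rw [show 2 * (α - 1) / α = 2 - 2 / α by field_simp, Real.rpow_sub hx,
      Real.rpow_two]
  rw [K1, if_pos hs]
  unfold Kxx pe qe
  rw [hx2, rpow_sub_one' hx, rpow_sub_one' hs, rpow_sub_two hs]
  unfold be
  field_simp
  ring

lemma measurable_Kt (α x : ℝ) : Measurable (Kt α x) := by
  unfold Kt Kker
  apply Measurable.ite measurableSet_Ioi _ measurable_const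
  fun_prop

lemma measurable_K1 (α x : ℝ) : Measurable (K1 α x) := by
  unfold K1
  apply Measurable.ite measurableSet_Ioi _ measurable_const
  fun_prop

lemma measurable_Kx (α x : ℝ) : Measurable (fun s => Kx α x s) := by
  unfold Kx; fun_prop

lemma measurable_Kxx (α x : ℝ) : Measurable (fun s => Kxx α x s) := by
  unfold Kxx; fun_prop

lemma rpow_mem_bound {A B z r : ℝ} (hA : 0 < A) (h1 : A ≤ z) (h2 : z ≤ B) :
    z ^ r ≤ A ^ r + B ^ r := by
  have hz : 0 < z := lt_of_lt_of_le hA h1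
  have hB : 0 < B := lt_of_lt_of_le hz h2
  rcases le_or_gt 0 r with hr | hr
  · have := Real.rpow_le_rpow hz.le h2 hr
    have := Real.rpow_pos_of_pos hA r
    linarith
  · have := Real.rpow_le_rpow_of_nonpos hA h1 hr.le
    have := Real.rpow_pos_of_pos hB r
    linarith

lemma be_mono {α z1 z2 : ℝ} (hα : 0 < α) (h1 : 0 < z1) (h2 : z1 ≤ z2) :
    be α z1 ≤ be α z2 := by
  unfold be
  have : z1 ^ (2/α) ≤ z2 ^ (2/α) := Real.rpow_le_rpow h1.le h2 (by positivity)
  nlinarith [sq_nonneg α]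

lemma Kt_nonneg {α x : ℝ} (hα : 0 < α) (hx : 0 < x) (s : ℝ) : 0 ≤ Kt α x s := by
  unfold Kt
  split
  · rw [Kker_eq]
    have := core_nonneg (b := be α x) (r := pe α) (by assumption)
    have := c0_pos hα
    positivity
  · exact le_refl 0

noncomputable def DK0 (α x : ℝ) : ℝ := c0 α * x * ((be α x) ^ (-(pe α)) * Mf (pe α))

lemma Kt_le {α x : ℝ} (hα : 0 < α) (hx : 0 < x) (s : ℝ) : Kt α x s ≤ DK0 α x := by
  unfold Kt DK0
  split
  · rw [Kker_eq]
    have h := core_bound (pe_pos hα) (be_pos hα hx) (by assumption)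
    exact mul_le_mul_of_nonneg_left h (by have := c0_pos hα; positivity)
  · have := c0_pos hα
    have := Mf_pos (pe_pos hα)
    have := Real.rpow_pos_of_pos (be_pos hα hx) (-(pe α))
    positivity

noncomputable def DK1 (α x : ℝ) : ℝ :=
  c0 α * x * (be α x * ((be α x) ^ (-(pe α + 2)) * Mf (pe α + 2)) +
    pe α * ((be α x) ^ (-(pe α + 1)) * Mf (pe α + 1)))

lemma DK1_nonneg {α x : ℝ} (hα : 0 < α) (hx : 0 < x) : 0 ≤ DK1 α x := by
  unfold DK1
  have := c0_pos hα
  have hb := be_pos hα hx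
  have := Mf_pos (show (0:ℝ) < pe α + 2 by have := pe_pos hα; linarith)
  have := Mf_pos (show (0:ℝ) < pe α + 1 by have := pe_pos hα; linarith)
  have := Real.rpow_pos_of_pos hb (-(pe α + 2))
  have := Real.rpow_pos_of_pos hb (-(pe α + 1))
  have := pe_pos hα
  positivity

lemma K1_abs_le {α x : ℝ} (hα : 0 < α) (hx : 0 < x) (s : ℝ) : |K1 α x s| ≤ DK1 α x := by
  unfold K1
  split
  · next hs =>
    set b := be α x with hbdef
    have hb := be_pos hα hx
    have hp := pe_pos hα
    have h2 : Real.exp (-(b / s)) * s ^ (-(pe α) - 2) = core b (pe α + 2) s := by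
      unfold core
      rw [show -(pe α + 2) = -(pe α) - 2 by ring]; ring
    have h1 : Real.exp (-(b / s)) * s ^ (-(pe α) - 1) = core b (pe α + 1) s := by
      unfold core
      rw [show -(pe α + 1) = -(pe α) - 1 by ring]; ring
    have c2 := core_bound (show (0:ℝ) < pe α + 2 by linarith) hb hs
    have c1 := core_bound (show (0:ℝ) < pe α + 1 by linarith) hb hs
    have cn2 := core_nonneg (b := b) (r := pe α + 2) hs
    have cn1 := core_nonneg (b := b) (r := pe α + 1) hs
    have hc0 := c0_pos hα
    have key : |Real.exp (-(b / s)) * (b * s ^ (-(pe α) - 2) - pe α * s ^ (-(pe α) - 1))|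
        ≤ b * core b (pe α + 2) s + pe α * core b (pe α + 1) s := by
      rw [mul_sub]
      refine (abs_sub _ _).trans ?_
      rw [abs_of_nonneg (by rw [show Real.exp (-(b/s)) * (b * s ^ (-(pe α) - 2)) =
            b * (Real.exp (-(b/s)) * s ^ (-(pe α) - 2)) by ring, h2]; positivity),
          abs_of_nonneg (by rw [show Real.exp (-(b/s)) * (pe α * s ^ (-(pe α) - 1)) =
            pe α * (Real.exp (-(b/s)) * s ^ (-(pe α) - 1)) by ring, h1]; positivity)]
      calc Real.exp (-(b/s)) * (b * s ^ (-(pe α) - 2)) +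
            Real.exp (-(b/s)) * (pe α * s ^ (-(pe α) - 1))
          = b * core b (pe α + 2) s + pe α * core b (pe α + 1) s := by
            rw [← h2, ← h1]; ring
        _ ≤ _ := le_refl _
    rw [abs_mul, abs_of_nonneg (by positivity : (0:ℝ) ≤ c0 α * x)]
    unfold DK1
    rw [← hbdef]
    have : c0 α * x * |Real.exp (-(b / s)) * (b * s ^ (-(pe α) - 2) - pe α * s ^ (-(pe α) - 1))|
        ≤ c0 α * x * (b * core b (pe α + 2) s + pe α * core b (pe α + 1) s) := by
      apply mul_le_mul_of_nonneg_left key (by positivity)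
    refine this.trans ?_
    apply mul_le_mul_of_nonneg_left _ (by positivity)
    have t2 : b * core b (pe α + 2) s ≤ b * (b ^ (-(pe α + 2)) * Mf (pe α + 2)) :=
      mul_le_mul_of_nonneg_left c2 hb.le
    have t1 : pe α * core b (pe α + 1) s ≤ pe α * (b ^ (-(pe α + 1)) * Mf (pe α + 1)) :=
      mul_le_mul_of_nonneg_left c1 hp.le
    linarith
  · simp only [abs_zero]
    exact DK1_nonneg hα hx

lemma core_succ {b r s : ℝ} (hs : 0 < s) : core b r s * s⁻¹ = core b (r + 1) s := by
  unfold core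
  rw [show -(r+1) = -r + (-1:ℝ) by ring, Real.rpow_add hs, Real.rpow_neg_one]
  ring

noncomputable def bb (α x : ℝ) : ℝ := be α (x/2)
noncomputable def Zq (α x : ℝ) : ℝ := (x/2) ^ qe α + (3*x/2) ^ qe α
noncomputable def Zq1 (α x : ℝ) : ℝ := (x/2) ^ (qe α - 1) + (3*x/2) ^ (qe α - 1)

noncomputable def DKx (α x : ℝ) : ℝ :=
  c0 α * ((bb α x) ^ (-(pe α)) * Mf (pe α)) +
  c0 α * (α^2/4 * qe α) * Zq α x * ((bb α x) ^ (-(pe α + 1)) * Mf (pe α + 1))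

noncomputable def DKxx (α x : ℝ) : ℝ :=
  c0 α * (α^2/4 * qe α) * Zq1 α x *
    ((α^2/4 * qe α) * Zq α x * ((bb α x) ^ (-(pe α + 2)) * Mf (pe α + 2)) +
     (1 + qe α) * ((bb α x) ^ (-(pe α + 1)) * Mf (pe α + 1)))

lemma qe_pos {α : ℝ} (hα : 0 < α) : 0 < qe α := by
  unfold qe; positivity

section KxBounds
variable {α x z s : ℝ}

lemma Kx_abs_le (hα : 0 < α) (hx : 0 < x)
    (hz1 : x/2 ≤ z) (hz2 : z ≤ 3*x/2) (hs : 0 < s) : |Kx α z s| ≤ DKx α x := by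
  have hx2 : (0:ℝ) < x/2 := by linarith
  have hz : 0 < z := lt_of_lt_of_le hx2 hz1
  have hb_ : 0 < bb α x := be_pos hα hx2
  have hbz : bb α x ≤ be α z := be_mono hα hx2 hz1
  have hq := qe_pos hα
  have hp := pe_pos hα
  have hc0 := c0_pos hα
  have ha2 : (0:ℝ) < α^2/4 := div_pos (pow_pos hα 2) (by norm_num)
  have hzq : 0 < z ^ qe α := Real.rpow_pos_of_pos hz _
  have hZq : z ^ qe α ≤ Zq α x := rpow_mem_bound hx2 hz1 hz2
  have hZqp : 0 < Zq α x := lt_of_lt_of_le hzq hZq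
  have hM1 : 0 < Mf (pe α) := Mf_pos hp
  have hM2 : 0 < Mf (pe α + 1) := Mf_pos (by linarith)
  have hB1 : 0 < (bb α x) ^ (-(pe α)) := Real.rpow_pos_of_pos hb_ _
  have hB2 : 0 < (bb α x) ^ (-(pe α + 1)) := Real.rpow_pos_of_pos hb_ _
  have hKx : Kx α z s = c0 α * core (be α z) (pe α) s -
      c0 α * (α^2/4 * qe α) * z ^ qe α * (core (be α z) (pe α) s * s⁻¹) := by
    unfold Kx core; ring
  rw [hKx, core_succ hs]
  have e1 : core (be α z) (pe α) s ≤ (bb α x) ^ (-(pe α)) * Mf (pe α) :=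
    (core_mono hs hbz).trans (core_bound hp hb_ hs)
  have e2 : core (be α z) (pe α + 1) s ≤ (bb α x) ^ (-(pe α + 1)) * Mf (pe α + 1) :=
    (core_mono hs hbz).trans (core_bound (by linarith) hb_ hs)
  have n1 := core_nonneg (b := be α z) (r := pe α) hs
  have n2 := core_nonneg (b := be α z) (r := pe α + 1) hs
  refine (abs_sub _ _).trans ?_
  rw [abs_of_nonneg (mul_nonneg hc0.le n1),
      abs_of_nonneg (mul_nonneg (mul_nonneg (mul_nonneg hc0.le
        (mul_pos ha2 hq).le) hzq.le) n2)]
  unfold DKx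
  have t1 : c0 α * core (be α z) (pe α) s ≤ c0 α * ((bb α x) ^ (-(pe α)) * Mf (pe α)) :=
    mul_le_mul_of_nonneg_left e1 hc0.le
  have t2 : c0 α * (α^2/4 * qe α) * z ^ qe α * core (be α z) (pe α + 1) s ≤
      c0 α * (α^2/4 * qe α) * Zq α x * ((bb α x) ^ (-(pe α + 1)) * Mf (pe α + 1)) :=
    mul_le_mul (mul_le_mul_of_nonneg_left hZq (mul_nonneg hc0.le (mul_pos ha2 hq).le))
      e2 n2 (mul_nonneg (mul_nonneg hc0.le (mul_pos ha2 hq).le) hZqp.le)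
  linarith

lemma Kxx_abs_le (hα : 0 < α) (hx : 0 < x)
    (hz1 : x/2 ≤ z) (hz2 : z ≤ 3*x/2) (hs : 0 < s) : |Kxx α z s| ≤ DKxx α x := by
  have hx2 : (0:ℝ) < x/2 := by linarith
  have hz : 0 < z := lt_of_lt_of_le hx2 hz1
  have hb_ : 0 < bb α x := be_pos hα hx2
  have hbz : bb α x ≤ be α z := be_mono hα hx2 hz1
  have hq := qe_pos hα
  have hp := pe_pos hα
  have hc0 := c0_pos hα
  have ha2 : (0:ℝ) < α^2/4 := div_pos (pow_pos hα 2) (by norm_num)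
  have haq : (0:ℝ) < α^2/4 * qe α := mul_pos ha2 hq
  have hzq : 0 < z ^ qe α := Real.rpow_pos_of_pos hz _
  have hzq1 : 0 < z ^ (qe α - 1) := Real.rpow_pos_of_pos hz _
  have hZq : z ^ qe α ≤ Zq α x := rpow_mem_bound hx2 hz1 hz2
  have hZq1 : z ^ (qe α - 1) ≤ Zq1 α x := rpow_mem_bound hx2 hz1 hz2
  have hZqp : 0 < Zq α x := lt_of_lt_of_le hzq hZq
  have hZq1p : 0 < Zq1 α x := lt_of_lt_of_le hzq1 hZq1
  have hM2 : 0 < Mf (pe α + 1) := Mf_pos (by linarith)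
  have hM3 : 0 < Mf (pe α + 2) := Mf_pos (by linarith)
  have hB2 : 0 < (bb α x) ^ (-(pe α + 1)) := Real.rpow_pos_of_pos hb_ _
  have hB3 : 0 < (bb α x) ^ (-(pe α + 2)) := Real.rpow_pos_of_pos hb_ _
  have hKxx : Kxx α z s = c0 α * (α^2/4 * qe α) * z ^ (qe α - 1) *
      ((α^2/4 * qe α) * z ^ qe α * (core (be α z) (pe α) s * s⁻¹ * s⁻¹) -
       (1 + qe α) * (core (be α z) (pe α) s * s⁻¹)) := by
    unfold Kxx core; ring
  rw [hKxx, core_succ hs, core_succ hs]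
  have e2 : core (be α z) (pe α + 1) s ≤ (bb α x) ^ (-(pe α + 1)) * Mf (pe α + 1) :=
    (core_mono hs hbz).trans (core_bound (by linarith) hb_ hs)
  have e3 : core (be α z) (pe α + 1 + 1) s ≤ (bb α x) ^ (-(pe α + 2)) * Mf (pe α + 2) := by
    rw [show pe α + 1 + 1 = pe α + 2 by ring]
    exact (core_mono hs hbz).trans (core_bound (by linarith) hb_ hs)
  have n2 := core_nonneg (b := be α z) (r := pe α + 1) hs
  have n3 := core_nonneg (b := be α z) (r := pe α + 1 + 1) hs
  rw [abs_mul]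
  rw [abs_of_nonneg (mul_nonneg (mul_nonneg hc0.le haq.le) hzq1.le)]
  unfold DKxx
  have habs : |(α^2/4 * qe α) * z ^ qe α * core (be α z) (pe α + 1 + 1) s -
      (1 + qe α) * core (be α z) (pe α + 1) s| ≤
      (α^2/4 * qe α) * Zq α x * ((bb α x) ^ (-(pe α + 2)) * Mf (pe α + 2)) +
      (1 + qe α) * ((bb α x) ^ (-(pe α + 1)) * Mf (pe α + 1)) := by
    refine (abs_sub _ _).trans ?_
    rw [abs_of_nonneg (mul_nonneg (mul_nonneg haq.le hzq.le) n3),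
        abs_of_nonneg (mul_nonneg (by linarith) n2)]
    have u1 : (α^2/4 * qe α) * z ^ qe α * core (be α z) (pe α + 1 + 1) s ≤
        (α^2/4 * qe α) * Zq α x * ((bb α x) ^ (-(pe α + 2)) * Mf (pe α + 2)) :=
      mul_le_mul (mul_le_mul_of_nonneg_left hZq haq.le) e3 n3
        (mul_nonneg haq.le hZqp.le)
    have u2 : (1 + qe α) * core (be α z) (pe α + 1) s ≤
        (1 + qe α) * ((bb α x) ^ (-(pe α + 1)) * Mf (pe α + 1)) :=
      mul_le_mul_of_nonneg_left e2 (by linarith)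
    linarith
  exact mul_le_mul (mul_le_mul_of_nonneg_left hZq1 (mul_nonneg hc0.le haq.le)) habs
    (abs_nonneg _) (mul_nonneg (mul_nonneg hc0.le haq.le) hZq1p.le)

end KxBounds

lemma measurable_Kker_time (α x : ℝ) : Measurable (fun s => Kker α x s) := by
  unfold Kker; fun_prop

section Machine

variable {α T : ℝ} {g : ℝ → ℂ} {M : ℝ}

/-- integrability of bounded kernel times g -/
lemma integrableOn_ker_mul (hT : 0 < T) (hg : ContinuousOn g (Set.Icc 0 T))
    (hM : ∀ τ ∈ Set.Icc (0:ℝ) T, ‖g τ‖ ≤ M)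
    {ψ : ℝ → ℝ} (hm : Measurable ψ) {D : ℝ} (hD : ∀ s, |ψ s| ≤ D) (t : ℝ)
    {S : Set ℝ} (hS : MeasurableSet S) (hsub : S ⊆ Set.Icc 0 T) :
    IntegrableOn (fun τ => (ψ (t - τ) : ℂ) * g τ) S := by
  have hfin : volume S < ⊤ := (measure_mono hsub).trans_lt measure_Icc_lt_top
  have hmeas : AEStronglyMeasurable (fun τ => (ψ (t - τ) : ℂ) * g τ) (volume.restrict S) := by
    apply AEStronglyMeasurable.mul
    · exact (Complex.measurable_ofReal.comp
        (hm.comp (measurable_const.sub measurable_id))).aestronglyMeasurable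
    · exact ((hg.mono hsub).aestronglyMeasurable hS)
  apply Integrable.mono' (g := fun _ => D * M) ((integrableOn_const_iff).mpr (Or.inr hfin)) hmeas
  filter_upwards [ae_restrict_mem hS] with τ hτ
  rw [norm_mul, Complex.norm_real]
  have h1 : ‖ψ (t - τ)‖ ≤ D := hD _
  have h2 : ‖g τ‖ ≤ M := hM τ (hsub hτ)
  exact mul_le_mul h1 h2 (norm_nonneg _) ((abs_nonneg _).trans (hD 0))

lemma u_eq (hα : 0 < α) (hT : 0 < T) (hg : ContinuousOn g (Set.Icc 0 T))
    (hM : ∀ τ ∈ Set.Icc (0:ℝ) T, ‖g τ‖ ≤ M) {x t : ℝ}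
    (hx : 0 < x) (ht : 0 < t) (htT : t ≤ T) :
    Tt α t g x = ∫ τ in Set.Ioo (0:ℝ) T, (Kt α x (t - τ) : ℂ) * g τ := by
  have habs : ∀ s, |Kt α x s| ≤ DK0 α x := fun s => by
    rw [abs_of_nonneg (Kt_nonneg hα hx s)]; exact Kt_le hα hx s
  have h1 : Tt α t g x = ∫ τ in Set.Ioo (0:ℝ) t, (Kt α x (t - τ) : ℂ) * g τ := by
    unfold Tt
    apply setIntegral_congr_fun measurableSet_Ioo
    intro τ hτ
    have : 0 < t - τ := by simp only [Set.mem_Ioo] at hτ; linarith [hτ.2]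
    unfold Kt
    beta_reduce
    rw [if_pos this]
  rw [h1]
  have hunion : Set.Ioo (0:ℝ) t ∪ Set.Ico t T = Set.Ioo 0 T := Set.Ioo_union_Ico_eq_Ioo ht htT
  have hd : Disjoint (Set.Ioo (0:ℝ) t) (Set.Ico t T) := by
    apply Set.disjoint_left.mpr
    rintro τ ⟨_, h2⟩ ⟨h3, _⟩
    linarith
  have hi1 : IntegrableOn (fun τ => (Kt α x (t - τ) : ℂ) * g τ) (Set.Ioo 0 t) :=
    integrableOn_ker_mul hT hg hM (measurable_Kt α x) habs t measurableSet_Ioo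
      (fun τ hτ => ⟨hτ.1.le, hτ.2.le.trans htT⟩)
  have hi2 : IntegrableOn (fun τ => (Kt α x (t - τ) : ℂ) * g τ) (Set.Ico t T) :=
    integrableOn_ker_mul hT hg hM (measurable_Kt α x) habs t measurableSet_Ico
      (fun τ hτ => ⟨ht.le.trans hτ.1, hτ.2.le⟩)
  rw [← hunion, setIntegral_union hd measurableSet_Ico hi1 hi2]
  have hz : ∫ τ in Set.Ico t T, (Kt α x (t - τ) : ℂ) * g τ = 0 := by
    rw [setIntegral_congr_fun measurableSet_Ico (g := fun _ => (0:ℂ))]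
    · exact integral_zero _ _
    · intro τ hτ
      have : ¬ (0 < t - τ) := by simp only [Set.mem_Ico] at hτ; linarith [hτ.1]
      unfold Kt
      beta_reduce
      rw [if_neg this]
      simp
  rw [hz, add_zero]

lemma hasDerivAt_u_t (hα : 0 < α) (hT : 0 < T) (hg : ContinuousOn g (Set.Icc 0 T))
    (hM : ∀ τ ∈ Set.Icc (0:ℝ) T, ‖g τ‖ ≤ M) {x t : ℝ}
    (hx : 0 < x) (ht : 0 < t) (htT : t < T) :
    HasDerivAt (fun t' => Tt α t' g x)
      (∫ τ in Set.Ioo (0:ℝ) T, (K1 α x (t - τ) : ℂ) * g τ) t := by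
  have habs : ∀ s, |Kt α x s| ≤ DK0 α x := fun s => by
    rw [abs_of_nonneg (Kt_nonneg hα hx s)]; exact Kt_le hα hx s
  have key : HasDerivAt (fun t' => ∫ τ in Set.Ioo (0:ℝ) T, (Kt α x (t' - τ) : ℂ) * g τ)
      (∫ τ in Set.Ioo (0:ℝ) T, (K1 α x (t - τ) : ℂ) * g τ) t := by
    have := hasDerivAt_integral_of_dominated_loc_of_deriv_le
      (μ := volume.restrict (Set.Ioo (0:ℝ) T)) (x₀ := t)
      (F := fun t' τ => (Kt α x (t' - τ) : ℂ) * g τ)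
      (F' := fun t' τ => (K1 α x (t' - τ) : ℂ) * g τ)
      (bound := fun _ => DK1 α x * M) (s := Metric.ball t 1) (Metric.ball_mem_nhds t one_pos) ?_ ?_ ?_ ?_ ?_ ?_
    · exact this.2
    · filter_upwards with t'
      apply AEStronglyMeasurable.mul
      · exact (Complex.measurable_ofReal.comp
          ((measurable_Kt α x).comp (measurable_const.sub measurable_id))).aestronglyMeasurable
      · exact (hg.mono Set.Ioo_subset_Icc_self).aestronglyMeasurable measurableSet_Ioo
    · exact integrableOn_ker_mul hT hg hM (measurable_Kt α x) habs t measurableSet_Ioo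
        Set.Ioo_subset_Icc_self
    · apply AEStronglyMeasurable.mul
      · exact (Complex.measurable_ofReal.comp
          ((measurable_K1 α x).comp (measurable_const.sub measurable_id))).aestronglyMeasurable
      · exact (hg.mono Set.Ioo_subset_Icc_self).aestronglyMeasurable measurableSet_Ioo
    · filter_upwards [ae_restrict_mem measurableSet_Ioo] with τ hτ
      intro t' _
      rw [norm_mul, Complex.norm_real]
      exact mul_le_mul (K1_abs_le hα hx _) (hM τ (Set.Ioo_subset_Icc_self hτ))
        (norm_nonneg _) ((abs_nonneg _).trans (K1_abs_le hα hx 0))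
    · exact (integrableOn_const_iff).mpr (Or.inr (by rw [Real.volume_Ioo]; exact ENNReal.ofReal_lt_top))
    · filter_upwards with τ
      intro t' _
      have h1 : HasDerivAt (fun t' => Kt α x (t' - τ)) (K1 α x (t' - τ)) t' := by
        have h := (hasDerivAt_Kt hα hx (t' - τ)).comp t' ((hasDerivAt_id t').sub_const τ)
        simp only [mul_one] at h; exact h
      exact (h1.ofReal_comp).mul_const (g τ)
  apply key.congr_of_eventuallyEq
  filter_upwards [Ioo_mem_nhds ht htT] with t' ht'
  exact u_eq hα hT hg hM hx ht'.1 ht'.2.le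

end Machine

section MachineX

variable {α T : ℝ} {g : ℝ → ℂ} {M : ℝ}

lemma hasDerivAt_u_x (hα : 0 < α) (hT : 0 < T) (hg : ContinuousOn g (Set.Icc 0 T))
    (hM : ∀ τ ∈ Set.Icc (0:ℝ) T, ‖g τ‖ ≤ M) {t y : ℝ}
    (ht : 0 < t) (htT : t ≤ T) (hy : 0 < y) :
    HasDerivAt (fun z => Tt α t g z)
      (∫ τ in Set.Ioo (0:ℝ) t, (Kx α y (t - τ) : ℂ) * g τ) y := by
  have hsub : Set.Ioo (0:ℝ) t ⊆ Set.Icc 0 T :=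
    fun τ hτ => ⟨hτ.1.le, hτ.2.le.trans htT⟩
  have hball : ∀ z ∈ Metric.ball y (y/2), y/2 ≤ z ∧ z ≤ 3*y/2 := by
    intro z hz
    rw [Metric.mem_ball, Real.dist_eq, abs_lt] at hz
    constructor <;> linarith [hz.1, hz.2]
  have key := hasDerivAt_integral_of_dominated_loc_of_deriv_le
      (μ := volume.restrict (Set.Ioo (0:ℝ) t)) (x₀ := y)
      (F := fun z τ => (Kker α z (t - τ) : ℂ) * g τ)
      (F' := fun z τ => (Kx α z (t - τ) : ℂ) * g τ)
      (bound := fun _ => DKx α y * M) (s := Metric.ball y (y/2)) (Metric.ball_mem_nhds y (by linarith)) ?_ ?_ ?_ ?_ ?_ ?_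
  · exact key.2
  · filter_upwards with z
    apply AEStronglyMeasurable.mul
    · exact (Complex.measurable_ofReal.comp
        ((measurable_Kker_time α z).comp (measurable_const.sub measurable_id))).aestronglyMeasurable
    · exact (hg.mono hsub).aestronglyMeasurable measurableSet_Ioo
  · -- integrability of F y
    have habs : ∀ s, |Kt α y s| ≤ DK0 α y := fun s => by
      rw [abs_of_nonneg (Kt_nonneg hα hy s)]; exact Kt_le hα hy s
    have := integrableOn_ker_mul hT hg hM (measurable_Kt α y) habs t measurableSet_Ioo hsub
    apply this.congr_fun _ measurableSet_Ioo
    intro τ hτ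
    have hpos : 0 < t - τ := by simp only [Set.mem_Ioo] at hτ; linarith [hτ.2]
    unfold Kt
    beta_reduce
    rw [if_pos hpos]
  · apply AEStronglyMeasurable.mul
    · exact (Complex.measurable_ofReal.comp
        ((measurable_Kx α y).comp (measurable_const.sub measurable_id))).aestronglyMeasurable
    · exact (hg.mono hsub).aestronglyMeasurable measurableSet_Ioo
  · filter_upwards [ae_restrict_mem measurableSet_Ioo] with τ hτ
    intro z hz
    have hpos : 0 < t - τ := by simp only [Set.mem_Ioo] at hτ; linarith [hτ.2]
    rw [norm_mul, Complex.norm_real]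
    have hb := Kx_abs_le hα hy (hball z hz).1 (hball z hz).2 hpos
    exact mul_le_mul hb (hM τ (hsub hτ)) (norm_nonneg _)
      ((abs_nonneg _).trans (Kx_abs_le hα hy (z := y) (s := 1) (by linarith) (by linarith) one_pos))
  · exact (integrableOn_const_iff).mpr (Or.inr (by rw [Real.volume_Ioo]; exact ENNReal.ofReal_lt_top))
  · filter_upwards [ae_restrict_mem measurableSet_Ioo] with τ hτ
    intro z hz
    have hpos : 0 < t - τ := by simp only [Set.mem_Ioo] at hτ; linarith [hτ.2]
    have hzpos : 0 < z := lt_of_lt_of_le (by linarith) (hball z hz).1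
    exact ((hasDerivAt_Kker_x hpos hzpos).ofReal_comp).mul_const (g τ)

lemma hasDerivAt_u_xx (hα : 0 < α) (hT : 0 < T) (hg : ContinuousOn g (Set.Icc 0 T))
    (hM : ∀ τ ∈ Set.Icc (0:ℝ) T, ‖g τ‖ ≤ M) {t x : ℝ}
    (ht : 0 < t) (htT : t ≤ T) (hx : 0 < x) :
    HasDerivAt (fun y => ∫ τ in Set.Ioo (0:ℝ) t, (Kx α y (t - τ) : ℂ) * g τ)
      (∫ τ in Set.Ioo (0:ℝ) t, (Kxx α x (t - τ) : ℂ) * g τ) x := by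
  have hsub : Set.Ioo (0:ℝ) t ⊆ Set.Icc 0 T :=
    fun τ hτ => ⟨hτ.1.le, hτ.2.le.trans htT⟩
  have hball : ∀ z ∈ Metric.ball x (x/2), x/2 ≤ z ∧ z ≤ 3*x/2 := by
    intro z hz
    rw [Metric.mem_ball, Real.dist_eq, abs_lt] at hz
    constructor <;> linarith [hz.1, hz.2]
  have key := hasDerivAt_integral_of_dominated_loc_of_deriv_le
      (μ := volume.restrict (Set.Ioo (0:ℝ) t)) (x₀ := x)
      (F := fun y τ => (Kx α y (t - τ) : ℂ) * g τ)
      (F' := fun y τ => (Kxx α y (t - τ) : ℂ) * g τ)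
      (bound := fun _ => DKxx α x * M) (s := Metric.ball x (x/2)) (Metric.ball_mem_nhds x (by linarith)) ?_ ?_ ?_ ?_ ?_ ?_
  · exact key.2
  · filter_upwards with z
    apply AEStronglyMeasurable.mul
    · exact (Complex.measurable_ofReal.comp
        ((measurable_Kx α z).comp (measurable_const.sub measurable_id))).aestronglyMeasurable
    · exact (hg.mono hsub).aestronglyMeasurable measurableSet_Ioo
  · -- integrability of F x
    have habs : ∀ s, |(fun s => if 0 < s then Kx α x s else 0) s| ≤ DKx α x := by
      intro s
      beta_reduce
      split
      · exact Kx_abs_le hα hx (by linarith) (by linarith) (by assumption)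
      · rw [abs_zero]
        exact (abs_nonneg _).trans (Kx_abs_le hα hx (z := x) (s := 1) (by linarith) (by linarith) one_pos)
    have hm : Measurable (fun s => if 0 < s then Kx α x s else 0) :=
      Measurable.ite measurableSet_Ioi (measurable_Kx α x) measurable_const
    have := integrableOn_ker_mul hT hg hM hm habs t measurableSet_Ioo hsub
    apply this.congr_fun _ measurableSet_Ioo
    intro τ hτ
    have hpos : 0 < t - τ := by simp only [Set.mem_Ioo] at hτ; linarith [hτ.2]
    beta_reduce
    rw [if_pos hpos]
  · apply AEStronglyMeasurable.mul
    · exact (Complex.measurable_ofReal.comp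
        ((measurable_Kxx α x).comp (measurable_const.sub measurable_id))).aestronglyMeasurable
    · exact (hg.mono hsub).aestronglyMeasurable measurableSet_Ioo
  · filter_upwards [ae_restrict_mem measurableSet_Ioo] with τ hτ
    intro z hz
    have hpos : 0 < t - τ := by simp only [Set.mem_Ioo] at hτ; linarith [hτ.2]
    rw [norm_mul, Complex.norm_real]
    have hb := Kxx_abs_le hα hx (hball z hz).1 (hball z hz).2 hpos
    exact mul_le_mul hb (hM τ (hsub hτ)) (norm_nonneg _)
      ((abs_nonneg _).trans (Kxx_abs_le hα hx (z := x) (s := 1) (by linarith) (by linarith) one_pos))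
  · exact (integrableOn_const_iff).mpr (Or.inr (by rw [Real.volume_Ioo]; exact ENNReal.ofReal_lt_top))
  · filter_upwards [ae_restrict_mem measurableSet_Ioo] with τ hτ
    intro z hz
    have hpos : 0 < t - τ := by simp only [Set.mem_Ioo] at hτ; linarith [hτ.2]
    have hzpos : 0 < z := lt_of_lt_of_le (by linarith) (hball z hz).1
    exact ((hasDerivAt_Kx_x hpos hzpos).ofReal_comp).mul_const (g τ)

end MachineX

section Part1

variable {α T : ℝ} {g : ℝ → ℂ} {M : ℝ}

lemma part1 (hα : 0 < α) (hT : 0 < T) (hg : ContinuousOn g (Set.Icc 0 T))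
    (hM : ∀ τ ∈ Set.Icc (0:ℝ) T, ‖g τ‖ ≤ M) {x t : ℝ}
    (hx : 0 < x) (ht : 0 < t) (htT : t < T) :
    deriv (fun s => Tt α s g x) t =
      (x ^ (2 * (α - 1) / α) : ℝ) * iteratedDeriv 2 (fun y => Tt α t g y) x := by
  have habs1 : ∀ s, |K1 α x s| ≤ DK1 α x := K1_abs_le hα hx
  have d1 : deriv (fun s => Tt α s g x) t
      = ∫ τ in Set.Ioo (0:ℝ) T, (K1 α x (t - τ) : ℂ) * g τ :=
    (hasDerivAt_u_t hα hT hg hM hx ht htT).deriv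
  -- restrict the domain to Ioo 0 t
  have hunion : Set.Ioo (0:ℝ) t ∪ Set.Ico t T = Set.Ioo 0 T :=
    Set.Ioo_union_Ico_eq_Ioo ht htT.le
  have hd : Disjoint (Set.Ioo (0:ℝ) t) (Set.Ico t T) := by
    apply Set.disjoint_left.mpr
    rintro τ ⟨_, h2⟩ ⟨h3, _⟩
    linarith
  have hi1 : IntegrableOn (fun τ => (K1 α x (t - τ) : ℂ) * g τ) (Set.Ioo 0 t) :=
    integrableOn_ker_mul hT hg hM (measurable_K1 α x) habs1 t measurableSet_Ioo
      (fun τ hτ => ⟨hτ.1.le, hτ.2.le.trans htT.le⟩)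
  have hi2 : IntegrableOn (fun τ => (K1 α x (t - τ) : ℂ) * g τ) (Set.Ico t T) :=
    integrableOn_ker_mul hT hg hM (measurable_K1 α x) habs1 t measurableSet_Ico
      (fun τ hτ => ⟨ht.le.trans hτ.1, hτ.2.le⟩)
  have d2 : ∫ τ in Set.Ioo (0:ℝ) T, (K1 α x (t - τ) : ℂ) * g τ
      = ∫ τ in Set.Ioo (0:ℝ) t, (K1 α x (t - τ) : ℂ) * g τ := by
    rw [← hunion, setIntegral_union hd measurableSet_Ico hi1 hi2]
    have hz : ∫ τ in Set.Ico t T, (K1 α x (t - τ) : ℂ) * g τ = 0 := by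
      rw [setIntegral_congr_fun measurableSet_Ico (g := fun _ => (0:ℂ))]
      · exact integral_zero _ _
      · intro τ hτ
        have : ¬ (0 < t - τ) := by simp only [Set.mem_Ico] at hτ; linarith [hτ.1]
        unfold K1
        beta_reduce
        rw [if_neg this]
        simp
    rw [hz, add_zero]
  have d3 : ∫ τ in Set.Ioo (0:ℝ) t, (K1 α x (t - τ) : ℂ) * g τ
      = (x ^ (2 * (α - 1) / α) : ℝ) *
        ∫ τ in Set.Ioo (0:ℝ) t, (Kxx α x (t - τ) : ℂ) * g τ := by
    rw [← integral_const_mul]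
    apply setIntegral_congr_fun measurableSet_Ioo
    intro τ hτ
    have hpos : 0 < t - τ := by simp only [Set.mem_Ioo] at hτ; linarith [hτ.2]
    beta_reduce
    rw [kernel_pde hα hx hpos]
    push_cast
    ring
  -- second derivative side
  have hiter : iteratedDeriv 2 (fun y => Tt α t g y) x
      = ∫ τ in Set.Ioo (0:ℝ) t, (Kxx α x (t - τ) : ℂ) * g τ := by
    have h2 : iteratedDeriv 2 (fun y => Tt α t g y) x
        = deriv (deriv (fun y => Tt α t g y)) x := by
      rw [iteratedDeriv_succ, iteratedDeriv_one]
    rw [h2]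
    have he : deriv (fun y => Tt α t g y) =ᶠ[nhds x]
        (fun y => ∫ τ in Set.Ioo (0:ℝ) t, (Kx α y (t - τ) : ℂ) * g τ) := by
      filter_upwards [Ioi_mem_nhds hx] with y hy
      exact (hasDerivAt_u_x hα hT hg hM ht htT.le hy).deriv
    rw [he.deriv_eq]
    exact (hasDerivAt_u_xx hα hT hg hM ht htT.le hx).deriv
  rw [d1, d2, d3, hiter]

end Part1

section Parts34

variable {α T : ℝ} {g : ℝ → ℂ} {M : ℝ}

lemma norm_Tt_le (hα : 0 < α) (hT : 0 < T) (hg : ContinuousOn g (Set.Icc 0 T))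
    (hM : ∀ τ ∈ Set.Icc (0:ℝ) T, ‖g τ‖ ≤ M) {x t : ℝ} {C : ℝ}
    (hx : 0 < x) (ht : 0 < t) (htT : t ≤ T)
    (hC : ∀ τ ∈ Set.Ioo (0:ℝ) t, Kker α x (t - τ) ≤ C) :
    ‖Tt α t g x‖ ≤ C * M * t := by
  have hsub : Set.Ioo (0:ℝ) t ⊆ Set.Icc 0 T :=
    fun τ hτ => ⟨hτ.1.le, hτ.2.le.trans htT⟩
  have hfin : volume (Set.Ioo (0:ℝ) t) < ⊤ := by
    rw [Real.volume_Ioo]; exact ENNReal.ofReal_lt_top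
  have := norm_setIntegral_le_of_norm_le_const (C := C * M) (s := Set.Ioo (0:ℝ) t)
    (f := fun τ => (Kker α x (t - τ) : ℂ) * g τ) hfin ?_
  · refine this.trans ?_
    rw [Real.volume_real_Ioo_of_le (by linarith)]
    apply le_of_eq; ring_nf
  · intro τ hτ
    have hpos : 0 < t - τ := by simp only [Set.mem_Ioo] at hτ; linarith [hτ.2]
    rw [norm_mul, Complex.norm_real]
    have hk : ‖Kker α x (t - τ)‖ ≤ C := by
      rw [Real.norm_eq_abs, abs_of_nonneg]
      · exact hC τ hτ
      · rw [Kker_eq]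
        have := core_nonneg (b := be α x) (r := pe α) hpos
        have := c0_pos hα
        positivity
    have hg' : ‖g τ‖ ≤ M := hM τ (hsub hτ)
    exact mul_le_mul hk hg' (norm_nonneg _) ((norm_nonneg _).trans hk)

lemma part4 (hα : 0 < α) (hT : 0 < T) (hg : ContinuousOn g (Set.Icc 0 T))
    (hM : ∀ τ ∈ Set.Icc (0:ℝ) T, ‖g τ‖ ≤ M) {x : ℝ} (hx : 0 < x) :
    Tendsto (fun t => Tt α t g x) (nhdsWithin 0 (Set.Ioi 0)) (nhds 0) := by
  apply squeeze_zero_norm' (a := fun t => DK0 α x * M * t)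
  · filter_upwards [Ioo_mem_nhdsGT_of_mem (by constructor <;> simp [hT.le, hT] : (0:ℝ) ∈ Set.Ico 0 T)]
      with t ht
    apply norm_Tt_le hα hT hg hM hx ht.1 ht.2.le
    intro τ hτ
    have hpos : 0 < t - τ := by simp only [Set.mem_Ioo] at hτ; linarith [hτ.2]
    have : Kker α x (t - τ) = Kt α x (t - τ) := by unfold Kt; rw [if_pos hpos]
    rw [this]
    exact Kt_le hα hx _
  · have : Tendsto (fun t : ℝ => DK0 α x * M * t) (nhds 0) (nhds 0) := by
      have := ((continuous_const (y := DK0 α x * M)).mul continuous_id).tendsto (0:ℝ)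
      simpa [Pi.mul_def] using this
    exact tendsto_nhdsWithin_of_tendsto_nhds this

lemma core_split {b r s t : ℝ} (hb : 0 < b) (hr : 0 < r) (hs : 0 < s) (hst : s ≤ t) :
    core b r s ≤ Real.exp (-(b/(2*t))) * ((b/2) ^ (-r) * Mf r) := by
  have ht : 0 < t := lt_of_lt_of_le hs hst
  have h1 : core b r s = core (b/2) r s * Real.exp (-(b/2/s)) := by
    unfold core
    rw [mul_assoc, ← Real.exp_add]
    congr 2
    field_simp
    ring
  rw [h1]
  have h2 : Real.exp (-(b/2/s)) ≤ Real.exp (-(b/(2*t))) := by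
    apply Real.exp_le_exp.mpr
    have : b/(2*t) ≤ b/2/s := by
      rw [div_div]
      gcongr
      all_goals linarith
    linarith
  calc core (b/2) r s * Real.exp (-(b/2/s))
      ≤ ((b/2) ^ (-r) * Mf r) * Real.exp (-(b/(2*t))) :=
        mul_le_mul (core_bound hr (by linarith) hs) h2 (Real.exp_pos _).le
          (by have := Real.rpow_pos_of_pos (show (0:ℝ) < b/2 by linarith) (-r)
              have := Mf_pos hr
              positivity)
    _ = _ := by ring

end Parts34

section Part3

variable {α T : ℝ} {g : ℝ → ℂ} {M : ℝ}

lemma bound_tendsto (hα : 0 < α) {t : ℝ} (ht : 0 < t) (C : ℝ) :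
    Tendsto (fun x => C * (x * ((be α x / 2) ^ (-(pe α)) *
      Real.exp (-(be α x / (2 * t)))))) atTop (nhds 0) := by
  set a : ℝ := α ^ 2 / 4 with ha
  set q : ℝ := qe α with hqdef
  set p : ℝ := pe α with hpdef
  have hq := qe_pos hα
  have hap : (0:ℝ) < a := div_pos (pow_pos hα 2) (by norm_num)
  have hbt : (0:ℝ) < a / (2 * t) := by positivity
  have h1 : Tendsto (fun y : ℝ => y ^ (1/q - p) * Real.exp (-(a / (2*t)) * y))
      atTop (nhds 0) := tendsto_rpow_mul_exp_neg_mul_atTop_nhds_zero _ _ hbt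
  have h2 : Tendsto (fun x : ℝ => x ^ q) atTop atTop := tendsto_rpow_atTop hq
  have h3 := ((h1.comp h2).const_mul ((a/2) ^ (-p))).const_mul C
  rw [mul_zero, mul_zero] at h3
  apply h3.congr'
  filter_upwards [eventually_gt_atTop 0] with x hx
  have hX : (0:ℝ) < x ^ q := Real.rpow_pos_of_pos hx _
  have hbe : be α x = a * x ^ q := by rw [ha, hqdef]; unfold be qe; ring
  simp only [Function.comp]
  rw [hbe]
  have e1 : (a * x ^ q / 2) ^ (-p) = (a/2) ^ (-p) * (x ^ q) ^ (-p) := by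
    rw [show a * x ^ q / 2 = (a/2) * x ^ q by ring, Real.mul_rpow (by positivity) hX.le]
  have e2 : (x ^ q) ^ (1/q - p) = x * (x ^ q) ^ (-p) := by
    rw [show 1/q - p = 1/q + (-p) by ring, Real.rpow_add hX]
    congr 1
    rw [← Real.rpow_mul hx.le]
    rw [show q * (1/q) = 1 from mul_one_div_cancel hq.ne']
    exact Real.rpow_one x
  have e3 : Real.exp (-(a/(2*t)) * x ^ q) = Real.exp (-(a * x ^ q / (2*t))) := by
    congr 1; ring
  rw [e1, e2, e3]
  ring

lemma part3 (hα : 0 < α) (hT : 0 < T) (hg : ContinuousOn g (Set.Icc 0 T))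
    (hM : ∀ τ ∈ Set.Icc (0:ℝ) T, ‖g τ‖ ≤ M) {t : ℝ} (ht : 0 < t) (htT : t < T) :
    Tendsto (fun x => Tt α t g x) atTop (nhds 0) := by
  have hM0 : 0 ≤ M := (norm_nonneg _).trans (hM 0 ⟨le_refl 0, hT.le⟩)
  apply squeeze_zero_norm' (a := fun x => (c0 α * Mf (pe α) * M * t) *
      (x * ((be α x / 2) ^ (-(pe α)) * Real.exp (-(be α x / (2 * t))))))
  · filter_upwards [eventually_gt_atTop 0] with x hx
    have hb := be_pos hα hx
    have hbound := norm_Tt_le hα hT hg hM (C := c0 α * x *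
        (Real.exp (-(be α x / (2*t))) * ((be α x / 2) ^ (-(pe α)) * Mf (pe α))))
        hx ht htT.le ?_
    · refine hbound.trans (le_of_eq ?_)
      ring
    · intro τ hτ
      have hpos : 0 < t - τ := by simp only [Set.mem_Ioo] at hτ; linarith [hτ.2]
      rw [Kker_eq]
      have := core_split (t := t) hb (pe_pos hα) hpos (by simp only [Set.mem_Ioo] at hτ; linarith [hτ.1])
      have hc0x : (0:ℝ) ≤ c0 α * x := by have := c0_pos hα; positivity
      exact mul_le_mul_of_nonneg_left this hc0x
  · exact bound_tendsto hα ht _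

end Part3

section Ginc

variable {α : ℝ}

noncomputable def Ginc (α y : ℝ) : ℝ := ∫ w in Set.Ioi y, Real.exp (-w) * w ^ (α/2 - 1)

lemma Ginc_decomp (hα : 0 < α) {y : ℝ} (hy : 0 < y) :
    Real.Gamma (α/2) = (∫ w in Set.Ioc 0 y, Real.exp (-w) * w ^ (α/2 - 1)) + Ginc α y := by
  have hint := Real.GammaIntegral_convergent (show 0 < α/2 by linarith)
  rw [Real.Gamma_eq_integral (show 0 < α/2 by linarith), ← Set.Ioc_union_Ioi_eq_Ioi hy.le,
    setIntegral_union (Set.Ioc_disjoint_Ioi le_rfl) measurableSet_Ioi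
      (hint.mono_set Set.Ioc_subset_Ioi_self) (hint.mono_set (Set.Ioi_subset_Ioi hy.le))]
  rfl

lemma Ginc_nonneg (hα : 0 < α) {y : ℝ} (hy : 0 < y) : 0 ≤ Ginc α y := by
  apply setIntegral_nonneg measurableSet_Ioi
  intro w hw
  have hw0 : 0 < w := lt_trans hy hw
  positivity

lemma tail_nonneg (hα : 0 < α) {y : ℝ} (hy : 0 < y) :
    0 ≤ ∫ w in Set.Ioc 0 y, Real.exp (-w) * w ^ (α/2 - 1) := by
  apply setIntegral_nonneg measurableSet_Ioc
  intro w hw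
  have hw0 : 0 < w := hw.1
  positivity

lemma tail_small (hα : 0 < α) {y : ℝ} (hy : 0 < y) :
    ∫ w in Set.Ioc 0 y, Real.exp (-w) * w ^ (α/2 - 1) ≤ y ^ (α/2) / (α/2) := by
  have hint : IntegrableOn (fun w : ℝ => Real.exp (-w) * w ^ (α/2 - 1)) (Set.Ioc 0 y) :=
    (Real.GammaIntegral_convergent (show 0 < α/2 by linarith)).mono_set
      Set.Ioc_subset_Ioi_self
  have hint2 : IntegrableOn (fun w : ℝ => w ^ (α/2 - 1)) (Set.Ioc 0 y) :=
    (intervalIntegrable_iff_integrableOn_Ioc_of_le hy.le).1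
      (intervalIntegral.intervalIntegrable_rpow' (by linarith))
  have h1 : ∫ w in Set.Ioc 0 y, Real.exp (-w) * w ^ (α/2 - 1)
      ≤ ∫ w in Set.Ioc 0 y, w ^ (α/2 - 1) := by
    apply setIntegral_mono_on hint hint2 measurableSet_Ioc
    intro w hw
    have hw0 : 0 < w := hw.1
    have he : Real.exp (-w) ≤ 1 := Real.exp_le_one_iff.mpr (by linarith)
    nlinarith [Real.rpow_pos_of_pos hw0 (α/2 - 1)]
  have h2 : ∫ w in Set.Ioc 0 y, w ^ (α/2 - 1) = y ^ (α/2) / (α/2) := by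
    rw [← intervalIntegral.integral_of_le hy.le,
      integral_rpow (Or.inl (by linarith : (-1:ℝ) < α/2 - 1))]
    rw [show α/2 - 1 + 1 = α/2 by ring, Real.zero_rpow (by positivity : α/2 ≠ 0)]
    ring
  linarith

lemma Ginc_le (hα : 0 < α) {y : ℝ} (hy : 0 < y) : Ginc α y ≤ Real.Gamma (α/2) := by
  have := Ginc_decomp hα hy
  have := tail_nonneg hα hy
  linarith

lemma Ginc_tendsto (hα : 0 < α) :
    Tendsto (Ginc α) (nhdsWithin 0 (Set.Ioi 0)) (nhds (Real.Gamma (α/2))) := by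
  rw [← tendsto_sub_nhds_zero_iff]
  apply squeeze_zero_norm' (a := fun y => y ^ (α/2) / (α/2))
  · filter_upwards [self_mem_nhdsWithin] with y (hy : 0 < y)
    have hd := Ginc_decomp hα hy
    have hn := tail_nonneg hα hy
    have hs := tail_small hα hy
    rw [Real.norm_eq_abs, abs_le]
    constructor
    · have := Ginc_le hα hy
      have : 0 ≤ y ^ (α/2) / (α/2) := le_trans hn hs
      linarith [Ginc_le hα hy]
    · linarith
  · apply tendsto_nhdsWithin_of_tendsto_nhds
    have hc : ContinuousAt (fun y : ℝ => y ^ (α/2)) 0 :=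
      Real.continuousAt_rpow_const 0 (α/2) (Or.inr (by positivity))
    have := hc.tendsto.div_const (α/2)
    rw [Real.zero_rpow (by positivity : α/2 ≠ 0), zero_div] at this
    exact this

end Ginc

section Mass

variable {α : ℝ}

noncomputable def mass (α x t : ℝ) : ℝ := ∫ s in Set.Ioo (0:ℝ) t, Kker α x s

lemma subst_eq (hα : 0 < α) {x t : ℝ} (hx : 0 < x) (ht : 0 < t) :
    Ginc α (be α x / t) = (be α x) ^ (α/2) *
      ∫ σ in Set.Ioo (0:ℝ) t, core (be α x) (pe α) σ := by
  set b := be α x with hbdef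
  have hb : 0 < b := be_pos hα hx
  have himg : (fun σ => b/σ) '' (Set.Ioo 0 t) = Set.Ioi (b/t) := by
    ext w
    simp only [Set.mem_image, Set.mem_Ioo, Set.mem_Ioi]
    constructor
    · rintro ⟨σ, ⟨h1, h2⟩, rfl⟩
      exact div_lt_div_of_pos_left hb h1 h2
    · intro hw
      have hbt : 0 < b/t := by positivity
      have hw0 : 0 < w := lt_trans hbt hw
      refine ⟨b/w, ⟨by positivity, ?_⟩, by field_simp⟩
      rw [div_lt_iff₀ hw0]
      calc b = (b/t) * t := by field_simp
        _ < w * t := by apply mul_lt_mul_of_pos_right hw ht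
        _ = t * w := by ring
  have hder : ∀ σ ∈ Set.Ioo (0:ℝ) t, HasDerivWithinAt (fun σ => b/σ)
      (-(b/σ^2)) (Set.Ioo 0 t) σ := by
    intro σ hσ
    have hσ0 : σ ≠ 0 := ne_of_gt hσ.1
    have := ((hasDerivAt_inv hσ0).const_mul b)
    have h2 : HasDerivAt (fun σ => b/σ) (-(b/σ^2)) σ := by
      simp only [div_eq_mul_inv]
      refine this.congr_deriv ?_
      ring
    exact h2.hasDerivWithinAt
  have hinj : Set.InjOn (fun σ => b/σ) (Set.Ioo 0 t) := by
    intro σ1 h1 σ2 h2 heq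
    simp only at heq
    rw [div_eq_div_iff (ne_of_gt h1.1) (ne_of_gt h2.1)] at heq
    exact mul_left_cancel₀ (ne_of_gt hb) heq.symm
  have key := integral_image_eq_integral_abs_deriv_smul measurableSet_Ioo hder hinj
    (fun w => Real.exp (-w) * w ^ (α/2 - 1))
  rw [himg] at key
  unfold Ginc
  rw [key, ← integral_const_mul]
  apply setIntegral_congr_fun measurableSet_Ioo
  intro σ hσ
  have hσ0 : 0 < σ := hσ.1
  have hbσ : 0 < b/σ := by positivity
  beta_reduce
  rw [abs_neg, abs_of_pos (show (0:ℝ) < b/σ^2 by positivity), smul_eq_mul]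
  unfold core pe
  have hY : (0:ℝ) < σ ^ (α/2 - 1) := Real.rpow_pos_of_pos hσ0 _
  rw [Real.div_rpow hb.le hσ0.le, rpow_sub_one' hb,
      show -(α/2+1) = -(α/2-1) + (-2:ℝ) by ring, Real.rpow_add hσ0,
      Real.rpow_neg hσ0.le, rpow_neg_two_eq hσ0]
  field_simp

end Mass

section Mass2

variable {α : ℝ}

lemma const_id (hα : 0 < α) {x : ℝ} (hx : 0 < x) :
    c0 α * x = (be α x) ^ (α/2) / Real.Gamma (α/2) := by
  have hΓ : 0 < Real.Gamma (α/2) := Real.Gamma_pos_of_pos (by linarith)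
  have hX : (0:ℝ) < x ^ (2/α) := Real.rpow_pos_of_pos hx _
  have h1 : be α x = (α^2/4) * x ^ (2/α) := by unfold be; ring
  have h2 : (be α x) ^ (α/2) = (α^2/4) ^ (α/2) * (x ^ (2/α)) ^ (α/2) := by
    rw [h1, Real.mul_rpow (by positivity) hX.le]
  have h3 : (x ^ (2/α)) ^ (α/2) = x := by
    rw [← Real.rpow_mul hx.le, show 2/α * (α/2) = 1 by field_simp, Real.rpow_one]
  have h4 : (α^2/4 : ℝ) ^ (α/2) = α ^ α / 2 ^ α := by
    have e1 : (α^2/4 : ℝ) = (α/2) ^ (2:ℝ) := by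
      rw [Real.rpow_two]; ring
    rw [e1, ← Real.rpow_mul (by positivity : (0:ℝ) ≤ α/2),
      show (2:ℝ) * (α/2) = α by ring, Real.div_rpow hα.le (by norm_num)]
  rw [h2, h3, h4]
  unfold c0
  field_simp

lemma mass_eq (hα : 0 < α) {x t : ℝ} (hx : 0 < x) (ht : 0 < t) :
    mass α x t = Ginc α (be α x / t) / Real.Gamma (α/2) := by
  have hΓ : 0 < Real.Gamma (α/2) := Real.Gamma_pos_of_pos (by linarith)
  have hb : 0 < be α x := be_pos hα hx
  have hB : (0:ℝ) < (be α x) ^ (α/2) := Real.rpow_pos_of_pos hb _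
  have h1 : mass α x t = c0 α * x * ∫ σ in Set.Ioo (0:ℝ) t, core (be α x) (pe α) σ := by
    unfold mass
    rw [← integral_const_mul]
    apply setIntegral_congr_fun measurableSet_Ioo
    intro σ hσ
    exact Kker_eq α x σ
  rw [h1, const_id hα hx, subst_eq hα hx ht]
  field_simp

lemma mass_nonneg (hα : 0 < α) {x t : ℝ} (hx : 0 < x) (ht : 0 < t) : 0 ≤ mass α x t := by
  apply setIntegral_nonneg measurableSet_Ioo
  intro σ hσ
  rw [Kker_eq]
  have := core_nonneg (b := be α x) (r := pe α) hσ.1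
  have := c0_pos hα
  positivity

lemma mass_le_one (hα : 0 < α) {x t : ℝ} (hx : 0 < x) (ht : 0 < t) : mass α x t ≤ 1 := by
  have hΓ : 0 < Real.Gamma (α/2) := Real.Gamma_pos_of_pos (by linarith)
  have hb : 0 < be α x := be_pos hα hx
  rw [mass_eq hα hx ht, div_le_one hΓ]
  exact Ginc_le hα (by positivity)

lemma mass_tendsto_one (hα : 0 < α) {t : ℝ} (ht : 0 < t) :
    Tendsto (fun x => mass α x t) (nhdsWithin 0 (Set.Ioi 0)) (nhds 1) := by
  have hΓ : 0 < Real.Gamma (α/2) := Real.Gamma_pos_of_pos (by linarith)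
  have hq := qe_pos hα
  have hinner : Tendsto (fun x => be α x / t) (nhdsWithin 0 (Set.Ioi 0))
      (nhdsWithin 0 (Set.Ioi 0)) := by
    rw [tendsto_nhdsWithin_iff]
    constructor
    · have hc : ContinuousAt (fun x : ℝ => x ^ (2/α)) 0 :=
        Real.continuousAt_rpow_const 0 (2/α) (Or.inr (by positivity))
      have h2 := (hc.tendsto.const_mul (α^2/4)).div_const t
      rw [Real.zero_rpow (by positivity : (2:ℝ)/α ≠ 0), mul_zero, zero_div] at h2
      have h3 := h2.mono_left (nhdsWithin_le_nhds (s := Set.Ioi (0:ℝ)))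
      apply h3.congr
      intro x
      unfold be
      ring
    · filter_upwards [self_mem_nhdsWithin] with x (hx : 0 < x)
      have := be_pos hα hx
      exact Set.mem_Ioi.mpr (by positivity)
  have hcomp := (Ginc_tendsto hα).comp hinner
  have := hcomp.div_const (Real.Gamma (α/2))
  rw [div_self (ne_of_gt hΓ)] at this
  apply this.congr'
  filter_upwards [self_mem_nhdsWithin] with x (hx : 0 < x)
  simp only [Function.comp]
  rw [mass_eq hα hx ht]

lemma reflection_eq (hα : 0 < α) {x t : ℝ} (hx : 0 < x) (ht : 0 < t) :
    ∫ τ in Set.Ioo (0:ℝ) t, Kker α x (t - τ) = mass α x t := by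
  have hder : ∀ τ ∈ Set.Ioo (0:ℝ) t, HasDerivWithinAt (fun τ : ℝ => t - τ)
      (-1) (Set.Ioo 0 t) τ := by
    intro τ hτ
    exact ((hasDerivAt_id τ).const_sub t).hasDerivWithinAt
  have hinj : Set.InjOn (fun τ : ℝ => t - τ) (Set.Ioo 0 t) := by
    intro a _ b _ h
    simp only at h
    linarith
  have himg : (fun τ : ℝ => t - τ) '' (Set.Ioo 0 t) = Set.Ioo 0 t := by
    ext w
    simp only [Set.mem_image, Set.mem_Ioo]
    constructor
    · rintro ⟨τ, ⟨h1, h2⟩, rfl⟩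
      constructor <;> linarith
    · rintro ⟨h1, h2⟩
      exact ⟨t - w, ⟨by linarith, by linarith⟩, by ring⟩
  have key := integral_image_eq_integral_abs_deriv_smul measurableSet_Ioo hder hinj
    (fun s => Kker α x s)
  rw [himg] at key
  unfold mass
  rw [key]
  apply setIntegral_congr_fun measurableSet_Ioo
  intro τ hτ
  beta_reduce
  rw [abs_neg, abs_one, one_smul]

end Mass2

section Part2

variable {α T : ℝ} {g : ℝ → ℂ} {M : ℝ}

lemma integrableOn_Kker_mul (hα : 0 < α) (hT : 0 < T) {h : ℝ → ℂ}
    (hcont : ContinuousOn h (Set.Icc 0 T)) {Mh : ℝ}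
    (hMh : ∀ τ ∈ Set.Icc (0:ℝ) T, ‖h τ‖ ≤ Mh) {x t : ℝ}
    (hx : 0 < x) (ht : 0 < t) (htT : t ≤ T) {S : Set ℝ}
    (hS : MeasurableSet S) (hsub : S ⊆ Set.Ioo 0 t) :
    IntegrableOn (fun τ => (Kker α x (t - τ) : ℂ) * h τ) S := by
  have habs : ∀ s, |Kt α x s| ≤ DK0 α x := fun s => by
    rw [abs_of_nonneg (Kt_nonneg hα hx s)]; exact Kt_le hα hx s
  have hsub2 : S ⊆ Set.Icc 0 T := fun τ hτ =>
    ⟨(hsub hτ).1.le, (hsub hτ).2.le.trans htT⟩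
  have base := integrableOn_ker_mul hT hcont hMh (measurable_Kt α x) habs t hS hsub2
  apply base.congr_fun _ hS
  intro τ hτ
  have hpos : 0 < t - τ := by have := (hsub hτ).2; linarith
  unfold Kt
  beta_reduce
  rw [if_pos hpos]

lemma integrableOn_Kker_real (hα : 0 < α) {x t : ℝ} (hx : 0 < x) (ht : 0 < t)
    {S : Set ℝ} (hS : MeasurableSet S) (hsub : S ⊆ Set.Ioo 0 t) :
    IntegrableOn (fun τ => Kker α x (t - τ)) S := by
  have hfin : volume S < ⊤ :=
    lt_of_le_of_lt (measure_mono hsub) (by rw [Real.volume_Ioo]; exact ENNReal.ofReal_lt_top)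
  apply Integrable.mono' (g := fun _ => DK0 α x) ((integrableOn_const_iff).mpr (Or.inr hfin))
  · exact ((measurable_Kker_time α x).comp
      (measurable_const.sub measurable_id)).aestronglyMeasurable
  · filter_upwards [ae_restrict_mem hS] with τ hτ
    have hpos : 0 < t - τ := by have := (hsub hτ).2; linarith
    have heq : Kker α x (t - τ) = Kt α x (t - τ) := by unfold Kt; rw [if_pos hpos]
    rw [Real.norm_eq_abs, heq, abs_of_nonneg (Kt_nonneg hα hx _)]
    exact Kt_le hα hx _

lemma part2 (hα : 0 < α) (hT : 0 < T) (hg : ContinuousOn g (Set.Icc 0 T))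
    (hM : ∀ τ ∈ Set.Icc (0:ℝ) T, ‖g τ‖ ≤ M) {t : ℝ} (ht : 0 < t) (htT : t < T) :
    Tendsto (fun x => Tt α t g x) (nhdsWithin 0 (Set.Ioi 0)) (nhds (g t)) := by
  have hM0 : 0 ≤ M := (norm_nonneg _).trans (hM 0 ⟨le_refl 0, hT.le⟩)
  have htIcc : t ∈ Set.Icc (0:ℝ) T := ⟨ht.le, htT.le⟩
  have hgt : ‖g t‖ ≤ M := hM t htIcc
  have hc0 := c0_pos hα
  have hp := pe_pos hα
  rw [← tendsto_sub_nhds_zero_iff]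
  rw [NormedAddCommGroup.tendsto_nhds_zero]
  intro ε hε
  set ε' := ε/4 with hε'def
  have hε' : 0 < ε' := by positivity
  -- continuity of g at t
  obtain ⟨δ0, hδ0, hδ0p⟩ := Metric.continuousWithinAt_iff.mp (hg t htIcc) ε' hε'
  set δ := min (δ0/2) (t/2) with hδdef
  have hδpos : 0 < δ := lt_min (by linarith) (by linarith)
  have hδt : δ < t := lt_of_le_of_lt (min_le_right _ _) (by linarith)
  have hδδ0 : δ < δ0 := lt_of_le_of_lt (min_le_left _ _) (by linarith)
  have htδ : 0 < t - δ := by linarith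
  -- eventual smallness of A-piece bound
  have hA : Tendsto (fun x : ℝ => (c0 α * δ ^ (-(pe α)) * (2*M) * t) * x)
      (nhdsWithin 0 (Set.Ioi 0)) (nhds 0) := by
    apply tendsto_nhdsWithin_of_tendsto_nhds
    have := ((continuous_const (y := c0 α * δ ^ (-(pe α)) * (2*M) * t)).mul
      continuous_id).tendsto (0:ℝ)
    simpa [Pi.mul_def] using this
  have ev1 := hA.eventually (gt_mem_nhds hε')
  have hmt : Tendsto (fun x => |mass α x t - 1| * ‖g t‖)
      (nhdsWithin 0 (Set.Ioi 0)) (nhds 0) := by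
    have h1 := (((mass_tendsto_one hα ht).sub_const 1).abs).mul_const ‖g t‖
    simpa using h1
  have ev2 := hmt.eventually (gt_mem_nhds hε')
  filter_upwards [ev1, ev2, self_mem_nhdsWithin] with x hx1 hx2 hxmem
  have hx : 0 < x := hxmem
  have hb := be_pos hα hx
  -- integrability facts
  have hgsub : ContinuousOn (fun τ => g τ - g t) (Set.Icc 0 T) := hg.sub continuousOn_const
  have hMsub : ∀ τ ∈ Set.Icc (0:ℝ) T, ‖g τ - g t‖ ≤ M + M := fun τ hτ =>
    (norm_sub_le _ _).trans (add_le_add (hM τ hτ) hgt)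
  have hIKfull : IntegrableOn (fun τ => (Kker α x (t - τ) : ℂ) * (g τ - g t)) (Set.Ioo 0 t) :=
    integrableOn_Kker_mul hα hT hgsub hMsub hx ht htT.le measurableSet_Ioo (subset_refl _)
  have hIKg : IntegrableOn (fun τ => (Kker α x (t - τ) : ℂ) * g τ) (Set.Ioo 0 t) :=
    integrableOn_Kker_mul hα hT hg hM hx ht htT.le measurableSet_Ioo (subset_refl _)
  have hIKc : IntegrableOn (fun τ => (Kker α x (t - τ) : ℂ) * g t) (Set.Ioo 0 t) :=
    integrableOn_Kker_mul hα hT continuousOn_const (fun τ _ => le_refl ‖g t‖) hx ht htT.le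
      measurableSet_Ioo (subset_refl _)
  have hIKr : IntegrableOn (fun τ => Kker α x (t - τ)) (Set.Ioo 0 t) :=
    integrableOn_Kker_real hα hx ht measurableSet_Ioo (subset_refl _)
  -- the decomposition
  have hmassc : ∫ τ in Set.Ioo (0:ℝ) t, (Kker α x (t - τ) : ℂ) = ((mass α x t : ℝ) : ℂ) := by
    have h0 : ∫ τ in Set.Ioo (0:ℝ) t, (Kker α x (t - τ) : ℂ)
        = ((∫ τ in Set.Ioo (0:ℝ) t, Kker α x (t - τ) : ℝ) : ℂ) := integral_ofReal
    rw [h0, reflection_eq hα hx ht]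
  have hdecomp : Tt α t g x - g t =
      (∫ τ in Set.Ioo (0:ℝ) t, (Kker α x (t - τ) : ℂ) * (g τ - g t)) +
      (((mass α x t : ℝ) : ℂ) - 1) * g t := by
    have e0 : ∀ τ, (Kker α x (t - τ) : ℂ) * (g τ - g t)
        = (Kker α x (t - τ) : ℂ) * g τ - (Kker α x (t - τ) : ℂ) * g t := fun τ => by ring
    have e1 : ∫ τ in Set.Ioo (0:ℝ) t, (Kker α x (t - τ) : ℂ) * (g τ - g t)
        = (∫ τ in Set.Ioo (0:ℝ) t, (Kker α x (t - τ) : ℂ) * g τ)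
          - ∫ τ in Set.Ioo (0:ℝ) t, (Kker α x (t - τ) : ℂ) * g t := by
      simp_rw [e0]
      exact integral_sub hIKg hIKc
    have e2 : ∫ τ in Set.Ioo (0:ℝ) t, (Kker α x (t - τ) : ℂ) * g t
        = ((mass α x t : ℝ) : ℂ) * g t := by
      rw [integral_mul_const, hmassc]
    rw [e1, e2]
    unfold Tt
    ring
  rw [hdecomp]
  -- split the integral
  have hunion : Set.Ioo (0:ℝ) (t-δ) ∪ Set.Ico (t-δ) t = Set.Ioo 0 t :=
    Set.Ioo_union_Ico_eq_Ioo htδ (by linarith)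
  have hdisj : Disjoint (Set.Ioo (0:ℝ) (t-δ)) (Set.Ico (t-δ) t) := by
    apply Set.disjoint_left.mpr
    rintro τ ⟨_, h2⟩ ⟨h3, _⟩
    linarith
  have hsubA : Set.Ioo (0:ℝ) (t-δ) ⊆ Set.Ioo 0 t := fun τ hτ => ⟨hτ.1, by linarith [hτ.2]⟩
  have hsubB : Set.Ico (t-δ) t ⊆ Set.Ioo 0 t := fun τ hτ =>
    ⟨lt_of_lt_of_le htδ hτ.1, hτ.2⟩
  have hIA : IntegrableOn (fun τ => (Kker α x (t - τ) : ℂ) * (g τ - g t)) (Set.Ioo 0 (t-δ)) :=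
    hIKfull.mono_set hsubA
  have hIB : IntegrableOn (fun τ => (Kker α x (t - τ) : ℂ) * (g τ - g t)) (Set.Ico (t-δ) t) :=
    hIKfull.mono_set hsubB
  have hsplit : ∫ τ in Set.Ioo (0:ℝ) t, (Kker α x (t - τ) : ℂ) * (g τ - g t)
      = (∫ τ in Set.Ioo (0:ℝ) (t-δ), (Kker α x (t - τ) : ℂ) * (g τ - g t))
        + ∫ τ in Set.Ico (t-δ) t, (Kker α x (t - τ) : ℂ) * (g τ - g t) := by
    rw [← hunion, setIntegral_union hdisj measurableSet_Ico hIA hIB]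
  -- A-piece bound
  have hAbound : ‖∫ τ in Set.Ioo (0:ℝ) (t-δ), (Kker α x (t - τ) : ℂ) * (g τ - g t)‖
      ≤ (c0 α * δ ^ (-(pe α)) * (2*M) * t) * x := by
    have hfin : volume (Set.Ioo (0:ℝ) (t-δ)) < ⊤ := by
      rw [Real.volume_Ioo]; exact ENNReal.ofReal_lt_top
    have key := norm_setIntegral_le_of_norm_le_const (C := c0 α * x * δ ^ (-(pe α)) * (2*M))
      (s := Set.Ioo (0:ℝ) (t-δ)) (f := fun τ => (Kker α x (t - τ) : ℂ) * (g τ - g t)) hfin ?_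
    · refine key.trans ?_
      rw [Real.volume_real_Ioo_of_le (by linarith)]
      have hnn : (0:ℝ) ≤ c0 α * x * δ ^ (-(pe α)) * (2*M) := by
        have := Real.rpow_pos_of_pos hδpos (-(pe α))
        positivity
      calc c0 α * x * δ ^ (-(pe α)) * (2*M) * (t - δ - 0)
          ≤ c0 α * x * δ ^ (-(pe α)) * (2*M) * t := by
            apply mul_le_mul_of_nonneg_left (by linarith) hnn
        _ = (c0 α * δ ^ (-(pe α)) * (2*M) * t) * x := by ring
    · intro τ hτ
      have hs1 : δ ≤ t - τ := by have := hτ.2; simp only [Set.mem_Ioo] at hτ; linarith [hτ.2]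
      have hspos : 0 < t - τ := lt_of_lt_of_le hδpos hs1
      rw [norm_mul, Complex.norm_real]
      have hker : ‖Kker α x (t - τ)‖ ≤ c0 α * x * δ ^ (-(pe α)) := by
        rw [Real.norm_eq_abs, Kker_eq, abs_of_nonneg (by
          have := core_nonneg (b := be α x) (r := pe α) hspos; positivity)]
        have hcore : core (be α x) (pe α) (t - τ) ≤ δ ^ (-(pe α)) := by
          unfold core
          have he : Real.exp (-(be α x / (t - τ))) ≤ 1 :=
            Real.exp_le_one_iff.mpr (by
              have : 0 < be α x / (t - τ) := by positivity
              linarith)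
          have hr : (t - τ) ^ (-(pe α)) ≤ δ ^ (-(pe α)) :=
            Real.rpow_le_rpow_of_nonpos hδpos hs1 (by linarith)
          have hrp : (0:ℝ) < (t - τ) ^ (-(pe α)) := Real.rpow_pos_of_pos hspos _
          nlinarith
        exact mul_le_mul_of_nonneg_left hcore (by positivity)
      have hgb : ‖g τ - g t‖ ≤ 2*M := by
        have hmem : τ ∈ Set.Icc (0:ℝ) T := by
          have := hsubA hτ
          exact ⟨this.1.le, this.2.le.trans htT.le⟩
        have := hMsub τ hmem
        linarith
      exact mul_le_mul hker hgb (norm_nonneg _) ((norm_nonneg _).trans hker)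
  -- B-piece bound
  have hBbound : ‖∫ τ in Set.Ico (t-δ) t, (Kker α x (t - τ) : ℂ) * (g τ - g t)‖ ≤ ε' := by
    have h1 : ‖∫ τ in Set.Ico (t-δ) t, (Kker α x (t - τ) : ℂ) * (g τ - g t)‖
        ≤ ∫ τ in Set.Ico (t-δ) t, ‖(Kker α x (t - τ) : ℂ) * (g τ - g t)‖ :=
      norm_integral_le_integral_norm _
    have hIKrB : IntegrableOn (fun τ => Kker α x (t - τ)) (Set.Ico (t-δ) t) :=
      integrableOn_Kker_real hα hx ht measurableSet_Ico hsubB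
    have h2 : ∫ τ in Set.Ico (t-δ) t, ‖(Kker α x (t - τ) : ℂ) * (g τ - g t)‖
        ≤ ∫ τ in Set.Ico (t-δ) t, ε' * Kker α x (t - τ) := by
      apply setIntegral_mono_on hIB.norm (hIKrB.const_mul ε') measurableSet_Ico
      intro τ hτ
      have hτ2 : τ < t := hτ.2
      have hτ1 : t - δ ≤ τ := hτ.1
      have hspos : 0 < t - τ := by linarith
      have hτIcc : τ ∈ Set.Icc (0:ℝ) T :=
        ⟨(hsubB hτ).1.le, (hsubB hτ).2.le.trans htT.le⟩
      have hdist : dist τ t < δ0 := by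
        rw [Real.dist_eq, abs_lt]
        constructor <;> linarith
      have hgd : ‖g τ - g t‖ < ε' := by
        have := hδ0p hτIcc hdist
        rwa [dist_eq_norm] at this
      have hker0 : 0 ≤ Kker α x (t - τ) := by
        rw [Kker_eq]
        have := core_nonneg (b := be α x) (r := pe α) hspos
        positivity
      rw [norm_mul, Complex.norm_real, Real.norm_eq_abs, abs_of_nonneg hker0]
      calc Kker α x (t - τ) * ‖g τ - g t‖
          ≤ Kker α x (t - τ) * ε' := mul_le_mul_of_nonneg_left hgd.le hker0
        _ = ε' * Kker α x (t - τ) := by ring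
    have h3 : ∫ τ in Set.Ico (t-δ) t, ε' * Kker α x (t - τ)
        = ε' * ∫ τ in Set.Ico (t-δ) t, Kker α x (t - τ) := integral_const_mul _ _
    have h4 : ∫ τ in Set.Ico (t-δ) t, Kker α x (t - τ)
        ≤ ∫ τ in Set.Ioo (0:ℝ) t, Kker α x (t - τ) := by
      apply setIntegral_mono_set hIKr
      · filter_upwards [ae_restrict_mem measurableSet_Ioo] with τ hτ
        have hspos : 0 < t - τ := by have := hτ.2; simp only [Set.mem_Ioo] at hτ; linarith [hτ.2]
        rw [Kker_eq]
        have := core_nonneg (b := be α x) (r := pe α) hspos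
        positivity
      · exact HasSubset.Subset.eventuallyLE hsubB
    have h5 : ∫ τ in Set.Ioo (0:ℝ) t, Kker α x (t - τ) = mass α x t :=
      reflection_eq hα hx ht
    have h6 := mass_le_one hα hx ht
    calc ‖∫ τ in Set.Ico (t-δ) t, (Kker α x (t - τ) : ℂ) * (g τ - g t)‖
        ≤ ∫ τ in Set.Ico (t-δ) t, ‖(Kker α x (t - τ) : ℂ) * (g τ - g t)‖ := h1
      _ ≤ ∫ τ in Set.Ico (t-δ) t, ε' * Kker α x (t - τ) := h2
      _ = ε' * ∫ τ in Set.Ico (t-δ) t, Kker α x (t - τ) := h3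
      _ ≤ ε' * 1 := by
          apply mul_le_mul_of_nonneg_left _ hε'.le
          rw [← h5] at h6
          linarith
      _ = ε' := mul_one _
  -- mass term
  have hmassbound : ‖(((mass α x t : ℝ) : ℂ) - 1) * g t‖ < ε' := by
    rw [norm_mul, show (((mass α x t : ℝ)) : ℂ) - 1 = ((mass α x t - 1 : ℝ) : ℂ) by
      push_cast; ring, Complex.norm_real, Real.norm_eq_abs]
    exact hx2
  -- total
  have hAfinal : ‖∫ τ in Set.Ioo (0:ℝ) (t-δ), (Kker α x (t - τ) : ℂ) * (g τ - g t)‖ < ε' :=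
    lt_of_le_of_lt hAbound hx1
  calc ‖(∫ τ in Set.Ioo (0:ℝ) t, (Kker α x (t - τ) : ℂ) * (g τ - g t)) +
        (((mass α x t : ℝ) : ℂ) - 1) * g t‖
      ≤ ‖∫ τ in Set.Ioo (0:ℝ) t, (Kker α x (t - τ) : ℂ) * (g τ - g t)‖ +
        ‖(((mass α x t : ℝ) : ℂ) - 1) * g t‖ := norm_add_le _ _
    _ ≤ (‖∫ τ in Set.Ioo (0:ℝ) (t-δ), (Kker α x (t - τ) : ℂ) * (g τ - g t)‖ +
        ‖∫ τ in Set.Ico (t-δ) t, (Kker α x (t - τ) : ℂ) * (g τ - g t)‖) +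
        ‖(((mass α x t : ℝ) : ℂ) - 1) * g t‖ := by
          apply add_le_add_left
          rw [hsplit]
          exact norm_add_le _ _
    _ < ε' + ε' + ε' := by
          apply add_lt_add (add_lt_add_of_lt_of_le hAfinal hBbound) hmassbound
    _ < ε := by rw [hε'def]; linarith

end Part2
theorem stmt5 (α T : ℝ) (hα : 0 < α) (hT : 0 < T)
    (g : ℝ → ℂ) (hg : ContinuousOn g (Set.Icc 0 T))
    (u : ℝ → ℝ → ℂ) (hu : ∀ x t : ℝ, u x t = Tt α t g x) :
    (∀ x t : ℝ, 0 < x → 0 < t → t < T →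
      deriv (fun s => u x s) t =
        (x ^ (2 * (α - 1) / α) : ℝ) * iteratedDeriv 2 (fun y => u y t) x) ∧
    (∀ t : ℝ, 0 < t → t < T →
      Tendsto (fun x => u x t) (nhdsWithin 0 (Set.Ioi 0)) (nhds (g t))) ∧
    (∀ t : ℝ, 0 < t → t < T → Tendsto (fun x => u x t) atTop (nhds 0)) ∧
    (∀ x : ℝ, 0 < x →
      Tendsto (fun t => u x t) (nhdsWithin 0 (Set.Ioi 0)) (nhds 0)) := by
  obtain ⟨M, hM⟩ := isCompact_Icc.exists_bound_of_continuousOn hg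
  refine ⟨?_, ?_, ?_, ?_⟩
  · intro x t hx ht htT
    rw [show (fun s => u x s) = fun s => Tt α s g x from funext fun s => hu x s,
        show (fun y => u y t) = fun y => Tt α t g y from funext fun y => hu y t]
    exact part1 hα hT hg hM hx ht htT
  · intro t ht htT
    rw [show (fun x => u x t) = fun x => Tt α t g x from funext fun x => hu x t]
    exact part2 hα hT hg hM ht htT
  · intro t ht htT
    rw [show (fun x => u x t) = fun x => Tt α t g x from funext fun x => hu x t]
    exact part3 hα hT hg hM ht htT
  · intro x hx
    rw [show (fun t => u x t) = fun t => Tt α t g x from funext fun t => hu x t]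
    exact part4 hα hT hg hM hx
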